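/- Let v : ℝ → ℝ be bounded Borel with limits v(x) → a_± as x → ±∞, where a_+ ≠ a_−. Let H = p² + v(q) on L²(ℝ). Then s-lim_{s→+∞} e^{isp}(H+i)^{-1}e^{−isp} = (p² + a_+ + i)^{-1} and s-lim_{s→−∞} e^{isp}(H+i)^{-1}e^{−isp} = (p² + a_− + i)^{-1}; in particular the two strong limits are different. -/

import Mathlib

open MeasureTheory Filter Topology
open scoped ENNReal NNReal

private lemma key_lintegral
    (v : ℝ → ℝ) (hmeas : Measurable v) (B : ℝ) (hB : ∀ x, |v x| ≤ B)
    (a : ℝ) (l : Filter ℝ) [l.IsCountablyGenerated]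
    (hl : ∀ y : ℝ, Tendsto (fun s : ℝ => y + s) l l)
    (hv : Tendsto v l (𝓝 a))
    (g : Lp ℂ 2 (volume : Measure ℝ)) :
    Tendsto (fun s : ℝ =>
      ∫⁻ y, (‖((a : ℂ) - (v (y + s) : ℂ)) * g y‖₊ : ℝ≥0∞) ^ (2:ℝ) ∂(volume : Measure ℝ))
      l (𝓝 0) := by
  rw [tendsto_iff_seq_tendsto]
  intro x hx
  have h0 : (0 : ℝ≥0∞) = ∫⁻ _y : ℝ, (0 : ℝ≥0∞) ∂(volume : Measure ℝ) := by simp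
  rw [Function.comp_def, h0]
  set C : ℝ≥0∞ := ENNReal.ofReal (|a| + B) with hC
  have hnorm : ∀ (t : ℝ), (‖((a : ℂ) - (v t : ℂ))‖₊ : ℝ≥0∞) ≤ C := by
    intro t
    rw [← enorm_eq_nnnorm, ← ofReal_norm, hC]
    apply ENNReal.ofReal_le_ofReal
    rw [← Complex.ofReal_sub, Complex.norm_real, Real.norm_eq_abs]
    exact (abs_sub a (v t)).trans (by gcongr; exact hB t)
  apply tendsto_lintegral_of_dominated_convergence'
    (bound := fun y => C ^ (2:ℝ) * (‖g y‖₊ : ℝ≥0∞) ^ (2:ℝ))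
  · intro n
    apply AEMeasurable.pow_const
    refine AEMeasurable.enorm (f := fun y => ((a : ℂ) - (v (y + x n) : ℂ)) * g y) ?_
    exact (Measurable.aemeasurable (by measurability)).mul
      (Lp.aestronglyMeasurable g).aemeasurable
  · intro n
    filter_upwards with y
    calc (‖((a : ℂ) - (v (y + x n) : ℂ)) * g y‖₊ : ℝ≥0∞) ^ (2:ℝ)
        = ((‖((a : ℂ) - (v (y + x n) : ℂ))‖₊ : ℝ≥0∞) * (‖g y‖₊ : ℝ≥0∞)) ^ (2:ℝ) := by
          rw [nnnorm_mul]; push_cast; ring_nf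
      _ ≤ (C * (‖g y‖₊ : ℝ≥0∞)) ^ (2:ℝ) := by
          gcongr
          exact hnorm _
      _ = C ^ (2:ℝ) * (‖g y‖₊ : ℝ≥0∞) ^ (2:ℝ) := ENNReal.mul_rpow_of_nonneg _ _ (by norm_num)
  · rw [lintegral_const_mul' _ _ (ENNReal.rpow_ne_top_of_nonneg (by norm_num) (by finiteness))]
    apply ENNReal.mul_ne_top (ENNReal.rpow_ne_top_of_nonneg (by norm_num) (by finiteness))
    have := lintegral_rpow_enorm_lt_top_of_eLpNorm_lt_top (f := (g : ℝ → ℂ))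
      (p := 2) (by norm_num) (by norm_num) (Lp.eLpNorm_lt_top g)
    simpa [enorm_eq_nnnorm] using this.ne
  · filter_upwards with y
    have t1 : Tendsto (fun n => v (y + x n)) atTop (𝓝 a) := hv.comp ((hl y).comp hx)
    have t2 : Tendsto (fun n => ((a : ℂ) - (v (y + x n) : ℂ)) * g y) atTop (𝓝 0) := by
      have := ((tendsto_const_nhds : Tendsto (fun _ : ℕ => (a:ℂ)) atTop (𝓝 (a:ℂ))).sub
        ((Complex.continuous_ofReal.tendsto a).comp t1)).mul_const (g y)
      simpa using this
    have t3 : Tendsto (fun n => (‖((a : ℂ) - (v (y + x n) : ℂ)) * g y‖₊ : ℝ≥0∞)) atTop (𝓝 0) := by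
      have h := ((ENNReal.continuous_coe.comp continuous_nnnorm).tendsto (0:ℂ)).comp t2
      simpa only [Function.comp_def, nnnorm_zero, ENNReal.coe_zero] using h
    have := t3.ennrpow_const (2:ℝ)
    rwa [ENNReal.zero_rpow_of_pos (by norm_num)] at this

private lemma strong_limit
    (v : ℝ → ℝ) (hmeas : Measurable v) (B : ℝ) (hB : ∀ x, |v x| ≤ B)
    (a : ℝ) (l : Filter ℝ) [l.IsCountablyGenerated]
    (hl : ∀ y : ℝ, Tendsto (fun s : ℝ => y + s) l l)
    (hv : Tendsto v l (𝓝 a))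
    (T : ℝ → (Lp ℂ 2 (volume : Measure ℝ) ≃ₗᵢ[ℂ] Lp ℂ 2 (volume : Measure ℝ)))
    (hT : ∀ (s : ℝ) (f : Lp ℂ 2 (volume : Measure ℝ)),
      ⇑(T s f) =ᵐ[volume] fun x : ℝ => f (x + s))
    (Mv R Ra : Lp ℂ 2 (volume : Measure ℝ) →L[ℂ] Lp ℂ 2 (volume : Measure ℝ))
    (hMv : ∀ f : Lp ℂ 2 (volume : Measure ℝ),
      ⇑(Mv f) =ᵐ[volume] fun x : ℝ => (v x : ℂ) * f x)
    (hRnorm : ‖R‖ ≤ 1)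
    (hTRa : ∀ (s : ℝ) (u : Lp ℂ 2 (volume : Measure ℝ)), T s (Ra u) = Ra (T s u))
    (hres : R - Ra = R ∘L ((a : ℂ) • (1 : Lp ℂ 2 (volume : Measure ℝ) →L[ℂ] Lp ℂ 2 (volume : Measure ℝ)) - Mv) ∘L Ra)
    (u : Lp ℂ 2 (volume : Measure ℝ)) :
    Tendsto (fun s : ℝ => T s (R ((T s).symm u))) l (𝓝 (Ra u)) := by
  set g : Lp ℂ 2 (volume : Measure ℝ) := Ra u with hg
  set N : ℝ → ℝ≥0∞ := fun s =>
    ∫⁻ y, (‖((a : ℂ) - (v (y + s) : ℂ)) * g y‖₊ : ℝ≥0∞) ^ (2:ℝ) ∂(volume : Measure ℝ) with hN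
  have step1 : ∀ s : ℝ, ‖T s (R ((T s).symm u)) - Ra u‖ ≤ ((N s) ^ (1/2 : ℝ)).toReal := by
    intro s
    set w : Lp ℂ 2 (volume : Measure ℝ) := (T s).symm u with hw
    have h1 : T s (Ra w) = g := by rw [hTRa, hw, (T s).apply_symm_apply, hg]
    have h2 : Ra w = (T s).symm g := by rw [← h1, (T s).symm_apply_apply]
    -- the a.e. description of (T s).symm g
    set ws : Lp ℂ 2 (volume : Measure ℝ) := (T s).symm g with hws'
    have hws : (fun x => ws (x + s)) =ᵐ[volume] ⇑g := by
      have h := hT s ws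
      rw [hws', (T s).apply_symm_apply] at h
      exact h.symm
    have coe : ⇑(((a : ℂ) • (1 : Lp ℂ 2 (volume : Measure ℝ) →L[ℂ] Lp ℂ 2 (volume : Measure ℝ)) - Mv) ws)
        =ᵐ[volume] fun x => ((a : ℂ) - (v x : ℂ)) * ws x := by
      have e1 : (((a : ℂ) • (1 : Lp ℂ 2 (volume : Measure ℝ) →L[ℂ] Lp ℂ 2 (volume : Measure ℝ)) - Mv) ws)
          = (a : ℂ) • ws - Mv ws := by
        simp [ContinuousLinearMap.sub_apply]
        rfl
      rw [e1]
      filter_upwards [Lp.coeFn_sub ((a : ℂ) • ws) (Mv ws), Lp.coeFn_smul (a : ℂ) ws, hMv ws]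
        with x hx1 hx2 hx3
      rw [hx1, Pi.sub_apply, hx2, Pi.smul_apply, hx3, smul_eq_mul]
      ring
    set F : ℝ → ℂ := fun x => ((a : ℂ) - (v x : ℂ)) * ws x with hF
    have hFmeas : AEStronglyMeasurable F (volume : Measure ℝ) :=
      ((measurable_const.sub (Complex.measurable_ofReal.comp hmeas)).aestronglyMeasurable).mul
        (Lp.aestronglyMeasurable ws)
    have hmp : MeasurePreserving (fun y : ℝ => y + s) (volume : Measure ℝ) (volume : Measure ℝ) :=
      measurePreserving_add_right _ s
    have e2 : eLpNorm (F ∘ (fun y : ℝ => y + s)) 2 (volume : Measure ℝ) = eLpNorm F 2 volume :=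
      eLpNorm_comp_measurePreserving hFmeas hmp
    have e3 : (F ∘ (fun y : ℝ => y + s)) =ᵐ[volume]
        (fun y => ((a : ℂ) - (v (y + s) : ℂ)) * g y) := by
      filter_upwards [hws] with y hy
      show ((a : ℂ) - (v (y + s) : ℂ)) * ws (y + s) = _
      rw [hy]
    have e4 : eLpNorm F 2 (volume : Measure ℝ) = (N s) ^ (1/2 : ℝ) := by
      rw [← e2, eLpNorm_congr_ae e3,
        eLpNorm_eq_lintegral_rpow_enorm_toReal (by norm_num) (by norm_num)]
      norm_num [hN, enorm_eq_nnnorm]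
    have e5 : ‖T s (R w) - Ra u‖ = ‖R w - Ra w‖ := by
      rw [← hg, ← h1, ← LinearIsometryEquiv.map_sub, LinearIsometryEquiv.norm_map]
    have e6 : R w - Ra w = R ((((a : ℂ) • (1 : Lp ℂ 2 (volume : Measure ℝ) →L[ℂ] Lp ℂ 2 (volume : Measure ℝ)) - Mv)) (Ra w)) := by
      have := congrArg (fun A : Lp ℂ 2 (volume : Measure ℝ) →L[ℂ] Lp ℂ 2 (volume : Measure ℝ) => A w) hres
      simpa using this
    calc ‖T s (R w) - Ra u‖ = ‖R w - Ra w‖ := e5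
      _ = ‖R ((((a : ℂ) • (1 : Lp ℂ 2 (volume : Measure ℝ) →L[ℂ] Lp ℂ 2 (volume : Measure ℝ)) - Mv)) (Ra w))‖ := by rw [e6]
      _ ≤ ‖R‖ * ‖(((a : ℂ) • (1 : Lp ℂ 2 (volume : Measure ℝ) →L[ℂ] Lp ℂ 2 (volume : Measure ℝ)) - Mv)) (Ra w)‖ :=
          R.le_opNorm _
      _ ≤ 1 * ‖(((a : ℂ) • (1 : Lp ℂ 2 (volume : Measure ℝ) →L[ℂ] Lp ℂ 2 (volume : Measure ℝ)) - Mv)) (Ra w)‖ := by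
          gcongr
      _ = ‖(((a : ℂ) • (1 : Lp ℂ 2 (volume : Measure ℝ) →L[ℂ] Lp ℂ 2 (volume : Measure ℝ)) - Mv)) ws‖ := by
          rw [one_mul, h2]
      _ = ((N s) ^ (1/2 : ℝ)).toReal := by
          rw [Lp.norm_def, eLpNorm_congr_ae coe, e4]
  have step2 : Tendsto (fun s => ((N s) ^ (1/2 : ℝ)).toReal) l (𝓝 0) := by
    have h := (key_lintegral v hmeas B hB a l hl hv g).ennrpow_const (1/2 : ℝ)
    rw [ENNReal.zero_rpow_of_pos (by norm_num)] at h
    have h2 := (ENNReal.tendsto_toReal (by simp : (0:ℝ≥0∞) ≠ ⊤)).comp h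
    simpa only [Function.comp_def, ENNReal.toReal_zero] using h2
  rw [tendsto_iff_norm_sub_tendsto_zero]
  exact squeeze_zero (fun s => norm_nonneg _) step1 step2


/-- Let `v : ℝ → ℝ` be bounded Borel with limits `v(x) → a±` as `x → ±∞`,
`a₊ ≠ a₋`, and `H = p² + v(q)` on `L²(ℝ)`.  We encode: `T s = e^{isp}` (translation),
`Mv` = multiplication by `v`, `R = (H+i)⁻¹`, `R± = (p²+a±+i)⁻¹`, through their
characteristic properties: the norm bound `‖R‖ ≤ 1`, translation invariance of `p²+a±`,
and the resolvent identities `R − R± = R((a± − v)(q))R±` and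
`R₊ − R₋ = (a₋ − a₊) R₊R₋` (with `R₊` injective).  Then
`e^{isp}(H+i)⁻¹e^{−isp} → (p²+a₊+i)⁻¹` strongly as `s → +∞`,
`e^{isp}(H+i)⁻¹e^{−isp} → (p²+a₋+i)⁻¹` strongly as `s → −∞`, and the two limits differ. -/
theorem anisotropic_resolvent_translation_limits
    (v : ℝ → ℝ) (hmeas : Measurable v) (hbdd : ∃ B : ℝ, ∀ x, |v x| ≤ B)
    (ap am : ℝ) (hvp : Tendsto v atTop (𝓝 ap)) (hvm : Tendsto v atBot (𝓝 am))
    (hne : ap ≠ am)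
    (T : ℝ → (Lp ℂ 2 (volume : Measure ℝ) ≃ₗᵢ[ℂ] Lp ℂ 2 (volume : Measure ℝ)))
    (hT : ∀ (s : ℝ) (f : Lp ℂ 2 (volume : Measure ℝ)),
      ⇑(T s f) =ᵐ[volume] fun x : ℝ => f (x + s))
    (Mv R Rp Rm : Lp ℂ 2 (volume : Measure ℝ) →L[ℂ] Lp ℂ 2 (volume : Measure ℝ))
    (hMv : ∀ f : Lp ℂ 2 (volume : Measure ℝ),
      ⇑(Mv f) =ᵐ[volume] fun x : ℝ => (v x : ℂ) * f x)
    (hRnorm : ‖R‖ ≤ 1)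
    (hTRp : ∀ (s : ℝ) (u : Lp ℂ 2 (volume : Measure ℝ)), T s (Rp u) = Rp (T s u))
    (hTRm : ∀ (s : ℝ) (u : Lp ℂ 2 (volume : Measure ℝ)), T s (Rm u) = Rm (T s u))
    (hresp : R - Rp = R ∘L ((ap : ℂ) • (1 : Lp ℂ 2 (volume : Measure ℝ) →L[ℂ] Lp ℂ 2 (volume : Measure ℝ)) - Mv) ∘L Rp)
    (hresm : R - Rm = R ∘L ((am : ℂ) • (1 : Lp ℂ 2 (volume : Measure ℝ) →L[ℂ] Lp ℂ 2 (volume : Measure ℝ)) - Mv) ∘L Rm)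
    (hRpRm : Rp - Rm = ((am - ap : ℝ) : ℂ) • (Rp ∘L Rm))
    (hinj : Function.Injective Rp) :
    (∀ u : Lp ℂ 2 (volume : Measure ℝ),
      Tendsto (fun s : ℝ => T s (R ((T s).symm u))) atTop (𝓝 (Rp u))) ∧
    (∀ u : Lp ℂ 2 (volume : Measure ℝ),
      Tendsto (fun s : ℝ => T s (R ((T s).symm u))) atBot (𝓝 (Rm u))) ∧
    Rp ≠ Rm := by
  obtain ⟨B, hB⟩ := hbdd
  refine ⟨fun u => strong_limit v hmeas B hB ap atTop
      (fun y => tendsto_atTop_add_const_left atTop y tendsto_id) hvp T hT Mv R Rp hMv hRnorm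
      hTRp hresp u,
    fun u => strong_limit v hmeas B hB am atBot
      (fun y => tendsto_atBot_add_const_left atBot y tendsto_id) hvm T hT Mv R Rm hMv hRnorm
      hTRm hresm u, ?_⟩
  intro h
  have hc : ((am - ap : ℝ) : ℂ) ≠ 0 := by
    simp only [ne_eq, Complex.ofReal_eq_zero, sub_eq_zero]
    exact fun hh => hne (hh.symm)
  have h1 : Rp ∘L Rm = 0 := by
    have h0 : ((am - ap : ℝ) : ℂ) • (Rp ∘L Rm) = 0 := by rw [← hRpRm, h, sub_self]
    exact (smul_eq_zero.mp h0).resolve_left hc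
  have hRm0 : Rm = 0 := by
    apply ContinuousLinearMap.ext; intro u
    apply hinj
    have h2 : Rp (Rm u) = 0 := by rw [← ContinuousLinearMap.comp_apply, h1]; simp
    simpa using h2
  set u₀ : Lp ℂ 2 (volume : Measure ℝ) :=
    indicatorConstLp 2 (measurableSet_Icc : MeasurableSet (Set.Icc (0:ℝ) 1))
      (by rw [Real.volume_Icc]; norm_num) (1 : ℂ) with hu₀
  have hz : u₀ = 0 := by
    apply hinj
    rw [h, hRm0]
    simp
  have hn1 : ‖u₀‖ = 1 := by
    rw [hu₀, norm_indicatorConstLp (by norm_num) (by norm_num), Real.volume_real_Icc]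
    norm_num
  rw [hz] at hn1
  simp at hn1
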